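/- Let x ∈ ℝ^{d×r} have full column rank and let x' = Proj_St(x) be its projection onto the Stiefel manifold (the polar factor). Then ‖x − x'‖_F ≤ ‖xᵀx − I_r‖_F. -/

import Mathlib

open Matrix BigOperators Finset

noncomputable section

namespace DRFGT

/-- Frobenius inner product `⟨A, B⟩ = Tr (A Bᵀ)`. -/
def finner {m k : Type*} [Fintype m] [Fintype k] (A B : Matrix m k ℝ) : ℝ :=
  Matrix.trace (A * Bᵀ)

/-- Frobenius norm `‖A‖_F = √⟨A, A⟩`. -/
def fnorm {m k : Type*} [Fintype m] [Fintype k] (A : Matrix m k ℝ) : ℝ :=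
  Real.sqrt (finner A A)

/-- Skew part of a square matrix, `skew(A) = (A − Aᵀ)/2`. -/
def mskew {m : Type*} [Fintype m] (A : Matrix m m ℝ) : Matrix m m ℝ :=
  (2 : ℝ)⁻¹ • (A - Aᵀ)

/-- Symmetric part of a square matrix, `sym(A) = (A + Aᵀ)/2`. -/
def msym {m : Type*} [Fintype m] (A : Matrix m m ℝ) : Matrix m m ℝ :=
  (2 : ℝ)⁻¹ • (A + Aᵀ)

/-- Relative (Riemannian) gradient `grad f(x) = skew(∇f(x) xᵀ) x`, where `Df` denotes the
Euclidean gradient `∇f` of `f`. -/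
def rgrad {d r : ℕ} (Df : Matrix (Fin d) (Fin r) ℝ → Matrix (Fin d) (Fin r) ℝ)
    (x : Matrix (Fin d) (Fin r) ℝ) : Matrix (Fin d) (Fin r) ℝ :=
  mskew (Df x * xᵀ) * x

/-- Landing field `Λ(x) = grad f(x) + λ x (xᵀ x − I_r)`. -/
def landing {d r : ℕ} (Df : Matrix (Fin d) (Fin r) ℝ → Matrix (Fin d) (Fin r) ℝ) (lam : ℝ)
    (x : Matrix (Fin d) (Fin r) ℝ) : Matrix (Fin d) (Fin r) ℝ :=
  rgrad Df x + lam • (x * (xᵀ * x - 1))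

/-- The Stiefel manifold `St(d,r) = {x : xᵀ x = I_r}`. -/
def St (d r : ℕ) : Set (Matrix (Fin d) (Fin r) ℝ) := {x | xᵀ * x = 1}

/-- The safety region `St(d,r)^ε = {x : ‖xᵀ x − I_r‖_F ≤ ε}`. -/
def StEps (d r : ℕ) (ε : ℝ) : Set (Matrix (Fin d) (Fin r) ℝ) :=
  {x | fnorm (xᵀ * x - 1) ≤ ε}

/-- The merit function `𝓛(x) = f(x) − ½⟨sym(xᵀ∇f(x)), xᵀx − I_r⟩ + γ·¼‖xᵀx − I_r‖_F²`. -/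
def merit {d r : ℕ} (f : Matrix (Fin d) (Fin r) ℝ → ℝ)
    (Df : Matrix (Fin d) (Fin r) ℝ → Matrix (Fin d) (Fin r) ℝ) (γ : ℝ)
    (x : Matrix (Fin d) (Fin r) ℝ) : ℝ :=
  f x - (2 : ℝ)⁻¹ * finner (msym (xᵀ * Df x)) (xᵀ * x - 1)
    + γ * (4 : ℝ)⁻¹ * fnorm (xᵀ * x - 1) ^ 2

/-- The gradient of the merit function at on-manifold points:
`∇𝓛(x) = ∇f(x) − x · sym(xᵀ∇f(x))` for `x ∈ St(d,r)`. -/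
def meritGradSt {d r : ℕ} (Df : Matrix (Fin d) (Fin r) ℝ → Matrix (Fin d) (Fin r) ℝ)
    (x : Matrix (Fin d) (Fin r) ℝ) : Matrix (Fin d) (Fin r) ℝ :=
  Df x - x * msym (xᵀ * Df x)

/-- `x'` is the polar factor of a full-column-rank `x`, i.e. the projection `Proj_St(x)` of `x`
onto the Stiefel manifold: if `x = U S Vᵀ` is a thin SVD then `x' = U Vᵀ`, equivalently
`x'ᵀ x' = I_r` and `x = x' P` for a positive definite `P` (namely `P = V S Vᵀ`). -/
def IsPolarFactor {d r : ℕ} (x x' : Matrix (Fin d) (Fin r) ℝ) : Prop :=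
  x'ᵀ * x' = 1 ∧ ∃ P : Matrix (Fin r) (Fin r) ℝ, P.PosDef ∧ x = x' * P

/-- Frobenius distance from `x` to a set `S`: `dist(S,x) = inf_{y ∈ S} ‖x − y‖_F`. -/
def fdist {d r : ℕ} (S : Set (Matrix (Fin d) (Fin r) ℝ)) (x : Matrix (Fin d) (Fin r) ℝ) : ℝ :=
  sInf ((fun y => fnorm (x - y)) '' S)

/-- Network average `z̄ = (1/n) Σᵢ zᵢ`. -/
def avg {n d r : ℕ} (z : Fin n → Matrix (Fin d) (Fin r) ℝ) : Matrix (Fin d) (Fin r) ℝ :=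
  (n : ℝ)⁻¹ • ∑ i, z i

/-- Frobenius norm of a stacked family: `‖𝐳‖_F = (Σᵢ ‖zᵢ‖_F²)^{1/2}`. -/
def snorm {n d r : ℕ} (z : Fin n → Matrix (Fin d) (Fin r) ℝ) : ℝ :=
  Real.sqrt (∑ i, fnorm (z i) ^ 2)


lemma trace_nonneg_of_psd {n : ℕ} {A : Matrix (Fin n) (Fin n) ℝ} (hA : A.PosSemidef) :
    0 ≤ A.trace := by
  rw [Matrix.trace]
  apply Finset.sum_nonneg
  intro i _
  have := (Matrix.posSemidef_iff_dotProduct_mulVec.mp hA).2 (Pi.single i 1)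
  simpa [Matrix.mulVec_single, dotProduct, Pi.single_apply] using this

lemma trace_mul_nonneg {n : ℕ} {A B : Matrix (Fin n) (Fin n) ℝ}
    (hA : A.PosSemidef) (hB : B.PosSemidef) : 0 ≤ (A * B).trace := by
  obtain ⟨C, rfl⟩ : ∃ C : Matrix (Fin n) (Fin n) ℝ, A = Cᴴ * C := by
    open scoped MatrixOrder in
    classical
    obtain ⟨B, rfl⟩ := CStarAlgebra.nonneg_iff_eq_star_mul_self.mp hA.nonneg
    exact ⟨B, rfl⟩
  have : (Cᴴ * C * B).trace = (C * B * Cᴴ).trace := by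
    rw [Matrix.mul_assoc, Matrix.trace_mul_comm, Matrix.mul_assoc]
  rw [this]
  exact trace_nonneg_of_psd (hB.mul_mul_conjTranspose_same C)

/-- For `x` of full column rank with projection `x' = Proj_St(x)` onto the
Stiefel manifold (the polar factor), `‖x − x'‖_F ≤ ‖xᵀx − I_r‖_F`. -/
theorem dist_to_polar_le {d r : ℕ}
    (x x' : Matrix (Fin d) (Fin r) ℝ) (hpf : IsPolarFactor x x') :
    fnorm (x - x') ≤ fnorm (xᵀ * x - 1) := by
  obtain ⟨h1, P, hP, rfl⟩ := hpf
  have hPt : Pᵀ = P := by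
    have := hP.isHermitian
    rwa [Matrix.IsHermitian, Matrix.conjTranspose_eq_transpose_of_trivial] at this
  have hxx : (x' * P)ᵀ * (x' * P) = P * P := by
    rw [Matrix.transpose_mul, Matrix.mul_assoc, ← Matrix.mul_assoc x'ᵀ, h1, hPt,
      Matrix.one_mul]
  have e1 : finner (x' * P - x') (x' * P - x') = ((P - 1) * (P - 1)ᵀ).trace := by
    have : x' * P - x' = x' * (P - 1) := by
      rw [Matrix.mul_sub, Matrix.mul_one]
    rw [finner, this, Matrix.transpose_mul, Matrix.trace_mul_comm,
      Matrix.mul_assoc (P - 1)ᵀ x'ᵀ, ← Matrix.mul_assoc x'ᵀ, h1, Matrix.one_mul,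
      Matrix.trace_mul_comm]
  have e2 : finner ((x' * P)ᵀ * (x' * P) - 1) ((x' * P)ᵀ * (x' * P) - 1)
      = ((P * P - 1) * (P * P - 1)ᵀ).trace := by
    rw [finner, hxx]
  have hQ : (P - 1)ᵀ = P - 1 := by
    rw [Matrix.transpose_sub, hPt, Matrix.transpose_one]
  have hQQ : (P * P - 1)ᵀ = P * P - 1 := by
    rw [Matrix.transpose_sub, Matrix.transpose_mul, hPt, Matrix.transpose_one]
  have key : ((P - 1) * (P - 1)ᵀ).trace ≤ ((P * P - 1) * (P * P - 1)ᵀ).trace := by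
    rw [hQ, hQQ]
    have hid : (P * P - 1) * (P * P - 1) - (P - 1) * (P - 1)
        = ((P - 1) * (P - 1)) * (P * P + (P + P)) := by noncomm_ring
    have hpsd1 : ((P - 1) * (P - 1)).PosSemidef := by
      have := Matrix.posSemidef_conjTranspose_mul_self (P - 1)
      rwa [Matrix.conjTranspose_eq_transpose_of_trivial, hQ] at this
    have hpsd2 : (P * P + (P + P)).PosSemidef := by
      have h2 : (P * P).PosSemidef := by
        have := Matrix.posSemidef_conjTranspose_mul_self P
        rwa [Matrix.conjTranspose_eq_transpose_of_trivial, hPt] at this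
      exact h2.add (hP.posSemidef.add hP.posSemidef)
    have := trace_mul_nonneg hpsd1 hpsd2
    rw [← hid] at this
    rw [Matrix.trace_sub] at this
    linarith
  rw [fnorm, fnorm]
  exact Real.sqrt_le_sqrt (by rw [e1, e2]; exact key)

end DRFGT
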